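/- Let X be a Hausdorff topological vector space over ℝ, let T_1,…,T_N be continuous linear operators on X, let A be a filter of subsets of ℕ, and let Z ⊆ X be a set with 0 ∈ Z, with the linear span of Z dense in X, and with T_i(Z) ⊆ Z for every i = 1,…,N. If the tuple of restrictions T_1|_Z,…,T_N|_Z (Z carrying the subspace topology) is disjoint A-transitive, then the tuple T_1,…,T_N is disjoint A-transitive on X. -/

import Mathlib

private lemma iInter_mem_filter {𝒜 : Set (Set ℕ)}
    (hUp : ∀ A B : Set ℕ, A ∈ 𝒜 → A ⊆ B → B ∈ 𝒜)
    (hCap : ∀ A B : Set ℕ, A ∈ 𝒜 → B ∈ 𝒜 → A ∩ B ∈ 𝒜)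
    (huniv : Set.univ ∈ 𝒜) {ι : Type*} [Fintype ι] (S : ι → Set ℕ)
    (h : ∀ k, S k ∈ 𝒜) : (⋂ k, S k) ∈ 𝒜 := by
  classical
  have key : ∀ s : Finset ι, (⋂ k ∈ s, S k) ∈ 𝒜 := by
    intro s
    induction s using Finset.induction_on with
    | empty => simpa using huniv
    | insert _ _ hx ih =>
      rw [Finset.set_biInter_insert]
      exact hCap _ _ (h _) ih
  have := key Finset.univ
  simpa using this

/-- Let `X` be a Hausdorff topological vector space over `ℝ`,
`T 1, …, T N` continuous linear operators on `X`, `𝒜` a filter of subsets of `ℕ`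
(a Furstenberg family closed under finite intersections), and `Z ⊆ X` a set with
`0 ∈ Z`, linearly dense in `X`, and invariant under each `T i`.  If the tuple of
restrictions `T i |_Z` (with the subspace topology on `Z`, whose nonempty open sets
are exactly the sets `V ∩ Z` with `V` open in `X` and `V ∩ Z ≠ ∅`) is disjoint
`𝒜`-transitive, then the tuple `T 1, …, T N` is disjoint `𝒜`-transitive on `X`. -/
theorem stmt_1 {X : Type*} [AddCommGroup X] [Module ℝ X] [TopologicalSpace X]
    [IsTopologicalAddGroup X] [ContinuousSMul ℝ X] [T2Space X]
    {N : ℕ} (T : Fin N → X →L[ℝ] X)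
    (𝒜 : Set (Set ℕ))
    (hInf : ∀ A ∈ 𝒜, A.Infinite)
    (hUp : ∀ A B : Set ℕ, A ∈ 𝒜 → A ⊆ B → B ∈ 𝒜)
    (hCap : ∀ A B : Set ℕ, A ∈ 𝒜 → B ∈ 𝒜 → A ∩ B ∈ 𝒜)
    (Z : Set X) (h0 : (0 : X) ∈ Z)
    (hdense : Dense (Submodule.span ℝ Z : Set X))
    (hinv : ∀ i, Set.MapsTo (T i) Z Z)
    (hZtrans : ∀ (V0 : Set X) (V : Fin N → Set X), IsOpen V0 → (V0 ∩ Z).Nonempty →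
        (∀ i, IsOpen (V i)) → (∀ i, (V i ∩ Z).Nonempty) →
        {m : ℕ | ∃ z ∈ V0 ∩ Z, ∀ i, (⇑(T i))^[m] z ∈ V i ∩ Z} ∈ 𝒜) :
    ∀ (V0 : Set X) (V : Fin N → Set X), IsOpen V0 → V0.Nonempty →
        (∀ i, IsOpen (V i)) → (∀ i, (V i).Nonempty) →
        {m : ℕ | ∃ z ∈ V0, ∀ i, (⇑(T i))^[m] z ∈ V i} ∈ 𝒜 := by
  classical
  intro V0 V hV0 hV0ne hV hVne
  have huniv : Set.univ ∈ 𝒜 := by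
    have h := hZtrans Set.univ (fun _ => Set.univ) isOpen_univ ⟨0, Set.mem_univ _, h0⟩
      (fun _ => isOpen_univ) (fun _ => ⟨0, Set.mem_univ _, h0⟩)
    exact hUp _ _ h (Set.subset_univ _)
  obtain ⟨x0, hx0V, hx0S⟩ := hdense.inter_open_nonempty V0 hV0 hV0ne
  have hy : ∀ i, ∃ yv, yv ∈ V i ∧ yv ∈ (Submodule.span ℝ Z : Set X) := fun i =>
    let ⟨yv, h1, h2⟩ := hdense.inter_open_nonempty (V i) (hV i) (hVne i)
    ⟨yv, h1, h2⟩
  choose y hyV hyS using hy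
  obtain ⟨n0, c0, g0, hg0⟩ := Submodule.mem_span_set'.mp hx0S
  choose n c g hg using fun i => Submodule.mem_span_set'.mp (hyS i)
  let cc : (Fin n0 ⊕ (Σ i : Fin N, Fin (n i))) → ℝ := Sum.elim c0 (fun p => c p.1 p.2)
  let pp : (Fin n0 ⊕ (Σ i : Fin N, Fin (n i))) → X := Sum.elim (fun j => (g0 j : X)) (fun _ => 0)
  let qq : Fin N → (Fin n0 ⊕ (Σ i : Fin N, Fin (n i))) → X := fun i => Sum.elim (fun _ => 0)
      (fun p => if p.1 = i then (g p.1 p.2 : X) else 0)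
  have hppZ : ∀ k, pp k ∈ Z := by rintro (j | p); exacts [(g0 j).2, h0]
  have hqqZ : ∀ i k, qq i k ∈ Z := by
    rintro i (j | p)
    · exact h0
    · simp only [qq, Sum.elim_inr]
      split
      · exact (g p.1 p.2).2
      · exact h0
  let L : ((Fin n0 ⊕ (Σ i : Fin N, Fin (n i))) → X) → X := fun a => ∑ k, cc k • a k
  have hL : Continuous L := continuous_finset_sum _
    (fun k _ => (continuous_apply k).const_smul (cc k))
  have hsum0 : L pp = x0 := by
    simp only [L, Fintype.sum_sum_type]
    simp only [pp, cc, Sum.elim_inl, Sum.elim_inr, smul_zero, Finset.sum_const_zero, add_zero]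
    exact hg0
  have hsumi : ∀ i, L (qq i) = y i := by
    intro i
    simp only [L, Fintype.sum_sum_type]
    simp only [qq, cc, Sum.elim_inl, Sum.elim_inr, smul_zero, Finset.sum_const_zero, zero_add]
    rw [← Finset.univ_sigma_univ, Finset.sum_sigma]
    have hterm : ∀ i' : Fin N, (∑ j, c i' j • (if i' = i then (g i' j : X) else 0))
        = if i' = i then y i else 0 := by
      intro i'
      by_cases h : i' = i
      · subst h; simp only [if_pos rfl]; exact hg i'
      · simp [h]
    calc (∑ i' : Fin N, ∑ j : Fin (n i'),
            c i' j • (if i' = i then (g i' j : X) else 0))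
          = ∑ i' : Fin N, (if i' = i then y i else 0) :=
            Finset.sum_congr rfl fun i' _ => hterm i'
      _ = y i := by simp
  obtain ⟨W0, hW0, hW0sub⟩ := (isOpen_pi_iff'.mp (hV0.preimage hL)) pp
    (by simpa [Set.mem_preimage, hsum0] using hx0V)
  have hWex : ∀ i, ∃ W : (Fin n0 ⊕ (Σ i : Fin N, Fin (n i))) → Set X, (∀ k, IsOpen (W k) ∧ qq i k ∈ W k) ∧
      Set.univ.pi W ⊆ L ⁻¹' (V i) := fun i =>
    (isOpen_pi_iff'.mp ((hV i).preimage hL)) (qq i)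
      (by simpa [Set.mem_preimage, hsumi i] using hyV i)
  choose W hW hWsub using hWex
  set S : (Fin n0 ⊕ (Σ i : Fin N, Fin (n i))) → Set ℕ := fun k =>
    {m : ℕ | ∃ z ∈ W0 k ∩ Z, ∀ i, (⇑(T i))^[m] z ∈ W i k ∩ Z} with hS
  have hSk : ∀ k, S k ∈ 𝒜 := fun k =>
    hZtrans (W0 k) (fun i => W i k) (hW0 k).1 ⟨pp k, (hW0 k).2, hppZ k⟩
      (fun i => (hW i k).1) (fun i => ⟨qq i k, (hW i k).2, hqqZ i k⟩)
  have hR := iInter_mem_filter hUp hCap huniv S hSk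
  refine hUp _ _ hR ?_
  intro m hm
  simp only [Set.mem_iInter, hS, Set.mem_setOf_eq] at hm
  choose z hz1 hz2 using hm
  have hlin : ∀ i (a : (Fin n0 ⊕ (Σ i : Fin N, Fin (n i))) → X), (⇑(T i))^[m] (L a) = L (fun k => (⇑(T i))^[m] (a k)) := by
    intro i a
    rw [← FunLike.coe_pow_eq_iterate (T i) m]
    simp only [L, map_sum, map_smul, FunLike.coe_pow_eq_iterate]
  refine ⟨L z, hW0sub fun k _ => (hz1 k).1, fun i => ?_⟩
  rw [hlin]
  exact hWsub i fun k _ => (hz2 k i).1
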